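/- Let λ = (λ₁, …, λ_l) be a partition with all λ_i > 0, and let n, k, N be positive integers. Then, in ℚ[x₁, …, x_N]: Σ_{ν} det(h_{λ_i − n·ν_i − i + j})_{i,j=1}^{l} = Σ_{μ} det(M(λ/μ)) · det(h_{μ_i − i + j})_{i,j=1}^{l}, where the left sum is over all ν = (ν₁, …, ν_l) ∈ ℕ^l with ν₁ + … + ν_l = k, and the right sum is over all partitions μ ⊆ λ with |μ| = |λ| − nk (μ padded with zero parts to length l). -/

import Mathlib

open MvPolynomial

namespace Pleth

/-- A partition: a weakly decreasing, finitely supported sequence of natural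
numbers (0-indexed: `parts i` is the (i+1)-st part). -/
structure Partition where
  parts : ℕ → ℕ
  antitone : ∀ ⦃i j : ℕ⦄, i ≤ j → parts j ≤ parts i
  finite : (Function.support parts).Finite

namespace Partition

/-- The empty partition. -/
def empty : Partition :=
  ⟨fun _ => 0, fun _ _ _ => le_rfl, by simp [Function.support]⟩

/-- The size `|λ|` of a partition. -/
noncomputable def size (p : Partition) : ℕ := ∑ᶠ i, p.parts i

/-- The length `ℓ(λ)`: the number of nonzero parts. -/
noncomputable def length (p : Partition) : ℕ := (Function.support p.parts).ncard

/-- Containment of partitions: `Sub μ λ` means `μ ⊆ λ`. -/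
def Sub (p q : Partition) : Prop := ∀ i, p.parts i ≤ q.parts i

/-- The cells (boxes) of the Young diagram, 0-indexed: `(i, j)` with `j < λ_{i+1}`. -/
def cells (p : Partition) : Set (ℕ × ℕ) := {c | c.2 < p.parts c.1}

end Partition

/-- The cells of the skew diagram `λ/μ`. -/
def skew (mu lam : Partition) : Set (ℕ × ℕ) := lam.cells \ mu.cells

/-- Two boxes are adjacent if they share an edge. -/
def Adj (a b : ℕ × ℕ) : Prop :=
  (a.1 = b.1 ∧ (a.2 + 1 = b.2 ∨ b.2 + 1 = a.2)) ∨
    (a.2 = b.2 ∧ (a.1 + 1 = b.1 ∨ b.1 + 1 = a.1))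

/-- A set of boxes is connected if any two of its boxes can be joined by a path
of edge-adjacent boxes inside the set. -/
def IsConnectedSet (S : Set (ℕ × ℕ)) : Prop :=
  ∀ a ∈ S, ∀ b ∈ S, Relation.ReflTransGen (fun x y => y ∈ S ∧ Adj x y) a b

/-- `S` contains no 2×2 block of boxes. -/
def No2x2 (S : Set (ℕ × ℕ)) : Prop :=
  ¬ ∃ i j : ℕ, (i, j) ∈ S ∧ (i + 1, j) ∈ S ∧ (i, j + 1) ∈ S ∧ (i + 1, j + 1) ∈ S

/-- `λ/μ` is a border strip of size `d`: `μ ⊆ λ`, it has exactly `d` boxes,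
it is connected, and contains no 2×2 block. -/
def IsBorderStrip (mu lam : Partition) (d : ℕ) : Prop :=
  Partition.Sub mu lam ∧ (skew mu lam).ncard = d ∧
    IsConnectedSet (skew mu lam) ∧ No2x2 (skew mu lam)

/-- The spin of a skew diagram: its number of nonempty rows minus 1. -/
noncomputable def spin (S : Set (ℕ × ℕ)) : ℕ := (Prod.fst '' S).ncard - 1

/-- `b` is the starting box of `S`: the box in its topmost nonempty row and,
within that row, rightmost column. -/
def IsStartBox (S : Set (ℕ × ℕ)) (b : ℕ × ℕ) : Prop :=
  b ∈ S ∧ (∀ c ∈ S, b.1 ≤ c.1) ∧ (∀ c ∈ S, c.1 = b.1 → c.2 ≤ b.2)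

/-- `(λ/μ)↑`: the boxes `(r, c)` of `S` such that `(r-1, c)` is not in `S`. -/
def up (S : Set (ℕ × ℕ)) : Set (ℕ × ℕ) :=
  {b | b ∈ S ∧ ∀ r : ℕ, r + 1 = b.1 → (r, b.2) ∉ S}

/-- `α` is an `n`-border strip chain of weight `τ` from `μ` to `λ`. -/
def IsChain (n : ℕ) (mu lam : Partition) (τ : List ℕ) (α : ℕ → Partition) : Prop :=
  α 0 = mu ∧ α τ.length = lam ∧
    ∀ i : Fin τ.length, IsBorderStrip (α i) (α (i + 1)) (τ.get i * n)

/-- `α` is a horizontal `n`-border strip chain of weight `τ` from `μ` to `λ`: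
the starting box of each strip in the chain lies in `(λ/μ)↑`. -/
def IsHorizontalChain (n : ℕ) (mu lam : Partition) (τ : List ℕ) (α : ℕ → Partition) : Prop :=
  IsChain n mu lam τ α ∧
    ∀ i : Fin τ.length, ∃ b, IsStartBox (skew (α i) (α (i + 1))) b ∧ b ∈ up (skew mu lam)

/-- `λ/μ` is an `n`-border strip of weight `k`. -/
def IsWeightStrip (n k : ℕ) (mu lam : Partition) : Prop :=
  ∃ (τ : List ℕ) (α : ℕ → Partition),
    (∀ t ∈ τ, 0 < t) ∧ τ.sum = k ∧ IsChain n mu lam τ α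

/-- `λ/μ` is a horizontal `n`-border strip of weight `k`: there is a horizontal
`n`-border strip chain of weight `(1, …, 1)` (`k` ones) from `μ` to `λ`. -/
def IsHorizontalWeightStrip (n k : ℕ) (mu lam : Partition) : Prop :=
  ∃ α : ℕ → Partition, IsHorizontalChain n mu lam (List.replicate k 1) α

/-- The sign of a chain of length `k`: the product of the signs
`(-1)^{spin}` of its strips. -/
noncomputable def chainSign (α : ℕ → Partition) (k : ℕ) : ℤ :=
  ∏ i ∈ Finset.range k, (-1 : ℤ) ^ spin (skew (α i) (α (i + 1)))

open scoped Classical in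
/-- The matrix `M(λ/μ)` (of size `l × l`, with `μ` padded by zero parts):
entry `(i,j)` is `1` if `λ_i - i ≥ μ_j - j` and `n ∣ (λ_i - i) - (μ_j - j)`,
and `0` otherwise. -/
noncomputable def Mmat (n : ℕ) (mu lam : Partition) (l : ℕ) : Matrix (Fin l) (Fin l) ℤ :=
  Matrix.of fun i j : Fin l =>
    if ((mu.parts j : ℤ) - (j : ℤ) ≤ (lam.parts i : ℤ) - (i : ℤ) ∧
        (n : ℤ) ∣ ((lam.parts i : ℤ) - (i : ℤ) - ((mu.parts j : ℤ) - (j : ℤ)))) then 1 else 0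

/-- The matrix `A(λ/μ)`: entry `(i,j)` is `λ_i - i - μ_j + j`. -/
def Amat (mu lam : Partition) (l : ℕ) : Matrix (Fin l) (Fin l) ℤ :=
  Matrix.of fun i j : Fin l =>
    (lam.parts i : ℤ) - (i : ℤ) - (mu.parts j : ℤ) + (j : ℤ)

/-- `h_r` for an integer index `r`, with `h_r = 0` for `r < 0`. -/
noncomputable def hInt (N : ℕ) (r : ℤ) : MvPolynomial (Fin N) ℚ :=
  if 0 ≤ r then hsymm (Fin N) ℚ r.toNat else 0

/-- `e_r` for an integer index `r`, with `e_r = 0` for `r < 0`. -/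
noncomputable def eInt (N : ℕ) (r : ℤ) : MvPolynomial (Fin N) ℚ :=
  if 0 ≤ r then esymm (Fin N) ℚ r.toNat else 0

/-- The Schur polynomial of a partition, via the Jacobi–Trudi determinant
`det(h_{λ_i - i + j})_{i,j=1}^{ℓ(λ)}`. -/
noncomputable def schur (N : ℕ) (p : Partition) : MvPolynomial (Fin N) ℚ :=
  Matrix.det (Matrix.of fun i j : Fin p.length =>
    hInt N ((p.parts i : ℤ) - (i : ℤ) + (j : ℤ)))

/-- `h_m(x₁ⁿ, …, x_Nⁿ)`, i.e. the plethysm `p_n ∘ h_m`. -/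
noncomputable def hpow (N n m : ℕ) : MvPolynomial (Fin N) ℚ :=
  aeval (fun i : Fin N => (X i : MvPolynomial (Fin N) ℚ) ^ n) (hsymm (Fin N) ℚ m)

/-- `e_k(x₁ⁿ, …, x_Nⁿ)`, i.e. up to sign the plethysm `p_n ∘ e_k`. -/
noncomputable def epow (N n k : ℕ) : MvPolynomial (Fin N) ℚ :=
  aeval (fun i : Fin N => (X i : MvPolynomial (Fin N) ℚ) ^ n) (esymm (Fin N) ℚ k)

/-- `z_λ` for `λ : Nat.Partition m`. -/
def zcoeff {m : ℕ} (P : Nat.Partition m) : ℕ :=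
  ∏ i ∈ P.parts.toFinset, i ^ (P.parts.count i) * (P.parts.count i).factorial

/-- The plethysm `h_n ∘ h_m` in `N` variables: the complete homogeneous
symmetric polynomial `h_n` evaluated at the family of all monomials of total
degree `m` in `x₁, …, x_N`. -/
noncomputable def hcomp (N n m : ℕ) : MvPolynomial (Fin N) ℚ :=
  aeval (fun d : (Finset.Nat.antidiagonalTuple N m : Finset (Fin N → ℕ)) =>
      ∏ i : Fin N, (X i : MvPolynomial (Fin N) ℚ) ^ (d.1 i))
    (hsymm (Finset.Nat.antidiagonalTuple N m : Finset (Fin N → ℕ)) ℚ n)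

/-- The sum, over all chains `∅ = λ⁽⁰⁾ ⊆ λ⁽¹⁾ ⊆ … ⊆ λ⁽ˡ⁾` of partitions such
that `λ⁽ⁱ⁾/λ⁽ⁱ⁻¹⁾` is a horizontal `L_i`-border strip of weight `m` for each
`i`, of `(∏ᵢ det M^{(L_i)}(λ⁽ⁱ⁾/λ⁽ⁱ⁻¹⁾)) · s_{λ⁽ˡ⁾}`. -/
noncomputable def chainExpansion (N m : ℕ) (L : List ℕ) : MvPolynomial (Fin N) ℚ :=
  ∑ᶠ c : {c : Fin (L.length + 1) → Partition //
      c 0 = Partition.empty ∧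
      ∀ i : Fin L.length, IsHorizontalWeightStrip (L.get i) m (c i.castSucc) (c i.succ)},
    ((∏ i : Fin L.length,
        Matrix.det (Mmat (L.get i) (c.1 i.castSucc) (c.1 i.succ) (c.1 i.succ).length) : ℤ) :
      MvPolynomial (Fin N) ℚ) * schur N (c.1 (Fin.last L.length))

end Pleth

section Aux
open Pleth Finset

namespace Pleth

theorem Partition.ext' {p q : Partition} (h : p.parts = q.parts) : p = q := by
  cases p; cases q; simp_all

theorem Partition.parts_eq_zero_of_length_le {p : Partition} {i : ℕ} (h : p.length ≤ i) :
    p.parts i = 0 := by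
  by_contra hne
  have hsub : (Finset.Iic i) ⊆ p.finite.toFinset := by
    intro j hj
    simp only [Finset.mem_Iic] at hj
    simp only [Set.Finite.mem_toFinset, Function.mem_support]
    intro h0
    exact hne (Nat.le_zero.mp (h0 ▸ p.antitone hj))
  have hcard := Finset.card_le_card hsub
  rw [Nat.card_Iic] at hcard
  have hL : p.length = p.finite.toFinset.card := Set.ncard_eq_toFinset_card _ p.finite
  omega

theorem Partition.size_eq_sum {p : Partition} {l : ℕ} (h : ∀ i, l ≤ i → p.parts i = 0) :
    p.size = ∑ i ∈ Finset.range l, p.parts i := by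
  apply finsum_eq_sum_of_support_subset
  intro j hj
  simp only [Function.mem_support] at hj
  simp only [Finset.coe_range, Set.mem_Iio]
  by_contra hlt
  exact hj (h j (not_lt.mp hlt))

theorem Partition.length_le_of_parts_eq_zero {p : Partition} {l : ℕ}
    (h : ∀ i, l ≤ i → p.parts i = 0) : p.length ≤ l := by
  have hs : Function.support p.parts ⊆ Set.Iio l := by
    intro j hj; by_contra hlt; exact hj (h j (not_lt.mp hlt))
  have := Set.ncard_le_ncard hs (Set.finite_Iio l)
  calc p.length ≤ (Set.Iio l).ncard := this
  _ = l := by rw [← Finset.coe_range, Set.ncard_coe_finset, Finset.card_range]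

theorem hInt_of_neg {N : ℕ} {r : ℤ} (h : r < 0) : hInt N r = 0 :=
  if_neg (not_le.mpr h)

/-- The determinant `det (h_{b i + j})` as a function of the row indices. -/
noncomputable def Dmat (N l : ℕ) (b : Fin l → ℤ) : MvPolynomial (Fin N) ℚ :=
  Matrix.det (Matrix.of fun i j : Fin l => hInt N (b i + (j : ℕ)))

theorem Dmat_eq_zero_of_not_injective {N l : ℕ} {b : Fin l → ℤ}
    (h : ¬ Function.Injective b) : Dmat N l b = 0 := by
  simp only [Function.Injective, not_forall] at h
  obtain ⟨i, i', hbb, hne⟩ := h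
  exact Matrix.det_zero_of_row_eq hne (by funext j; simp [hbb])

theorem Dmat_eq_zero_of_low {N l : ℕ} {b : Fin l → ℤ} (i : Fin l) (h : b i < 1 - l) :
    Dmat N l b = 0 := by
  apply Matrix.det_eq_zero_of_row_eq_zero i
  intro j
  simp only [Matrix.of_apply]
  apply hInt_of_neg
  have : (j : ℤ) ≤ (l : ℤ) - 1 := by
    have := j.isLt
    omega
  omega

theorem Dmat_perm {N l : ℕ} (b : Fin l → ℤ) (σ : Equiv.Perm (Fin l)) :
    Dmat N l (b ∘ σ) = (Equiv.Perm.sign σ : ℤ) * Dmat N l b := by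
  have := Matrix.det_permute σ (Matrix.of fun i j : Fin l => hInt N (b i + (j : ℕ)))
  simpa [Dmat, Matrix.submatrix] using this

theorem strictAnti_add_le {l : ℕ} {c : Fin l → ℤ} (hc : StrictAnti c) :
    ∀ (d : ℕ) (i j : Fin l), (j : ℕ) = (i : ℕ) + d → c j + (j : ℕ) ≤ c i + (i : ℕ) := by
  intro d
  induction d with
  | zero =>
    intro i j hij
    have : j = i := Fin.ext (by omega)
    simp [this]
  | succ d ih =>
    intro i j hij
    have hjl : (i : ℕ) + d < l := by have := j.isLt; omega
    set j' : Fin l := ⟨(i : ℕ) + d, hjl⟩ with hj'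
    have h1 : c j + (j : ℕ) ≤ c j' + (j' : ℕ) := by
      have hlt : j' < j := by
        rw [Fin.lt_def]; simp [hj']; omega
      have := hc hlt
      have hv : ((j : ℕ) : ℤ) = ((j' : ℕ) : ℤ) + 1 := by simp [hj']; omega
      omega
    exact le_trans h1 (ih i j' rfl)

theorem strictAnti_add_le' {l : ℕ} {c : Fin l → ℤ} (hc : StrictAnti c) {i j : Fin l}
    (hij : i ≤ j) : c j + (j : ℕ) ≤ c i + (i : ℕ) :=
  strictAnti_add_le hc ((j : ℕ) - (i : ℕ)) i j (by omega)

theorem perm_eq_one_of_strictMono {l : ℕ} {σ : Equiv.Perm (Fin l)} (h : StrictMono σ) :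
    σ = 1 := by
  have hinv : StrictMono (σ⁻¹ : Equiv.Perm (Fin l)) := by
    intro i j hij
    rcases lt_trichotomy ((σ⁻¹ : Equiv.Perm (Fin l)) i) ((σ⁻¹ : Equiv.Perm (Fin l)) j) with
      h1 | h1 | h1
    · exact h1
    · exfalso; rw [← (by simp : σ (σ⁻¹ i) = i), ← (by simp : σ (σ⁻¹ j) = j), h1] at hij
      exact lt_irrefl _ hij
    · exfalso
      have := h h1
      rw [(by simp : σ (σ⁻¹ i) = i), (by simp : σ (σ⁻¹ j) = j)] at this
      exact lt_irrefl _ (hij.trans this)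
  apply Equiv.ext
  intro x
  letI : WellFoundedLT (Fin l) := inferInstance
  have h1 : x ≤ σ x := h.le_apply (x := x)
  have h2 : σ x ≤ x := by
    have := hinv.le_apply (x := σ x)
    rwa [(by simp : σ⁻¹ (σ x) = x)] at this
  exact le_antisymm h2 h1

theorem perm_eq_of_strictAnti_comp {l : ℕ} {c : Fin l → ℤ} (hc : StrictAnti c)
    (π : Equiv.Perm (Fin l)) (h : StrictAnti (c ∘ π)) : π = 1 := by
  apply perm_eq_one_of_strictMono
  intro i j hij
  have := h hij
  simp only [Function.comp_apply] at this
  exact (hc.lt_iff_gt).mp this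

theorem sort_strictAnti {l : ℕ} (b : Fin l → ℤ) (hb : Function.Injective b) :
    StrictAnti (b ∘ Tuple.sort (fun i => -b i)) := by
  have hmono := Tuple.monotone_sort (fun i => -b i)
  intro i j hij
  have h1 : -b (Tuple.sort (fun i => -b i) i) ≤ -b (Tuple.sort (fun i => -b i) j) :=
    hmono (le_of_lt hij)
  have hne : b ((Tuple.sort (fun i => -b i)) i) ≠ b ((Tuple.sort (fun i => -b i)) j) := by
    intro hcontra
    exact absurd (hb hcontra) (by simp [(Equiv.injective _).ne_iff]; omega)
  simp only [Function.comp_apply]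
  omega

theorem cpart_strictAnti (p : Partition) {l : ℕ} :
    StrictAnti (fun i : Fin l => (p.parts i : ℤ) - (i : ℕ)) := by
  intro i j hij
  have h1 : p.parts j ≤ p.parts i := p.antitone (le_of_lt hij)
  have h2 : (i : ℕ) < (j : ℕ) := hij
  simp only
  omega

/-- Build a partition from a strictly decreasing sequence `c` with `c i + i ≥ 0`. -/
noncomputable def mkPart (l : ℕ) (c : Fin l → ℤ) : Partition :=
  if hc : StrictAnti c ∧ ∀ i : Fin l, 0 ≤ c i + (i : ℕ) then
    { parts := fun m => if h : m < l then (c ⟨m, h⟩ + m).toNat else 0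
      antitone := by
        have key : ∀ m : ℕ, (fun m => if h : m < l then (c ⟨m, h⟩ + m).toNat else 0) (m + 1) ≤
            (fun m => if h : m < l then (c ⟨m, h⟩ + m).toNat else 0) m := by
          intro m
          simp only
          by_cases h1 : m + 1 < l
          · have h0 : m < l := by omega
            rw [dif_pos h1, dif_pos h0]
            have := strictAnti_add_le' hc.1 (i := ⟨m, h0⟩) (j := ⟨m + 1, h1⟩)
              (by rw [Fin.le_def]; simp)
            simp only at this
            omega
          · rw [dif_neg h1]
            exact Nat.zero_le _
        exact antitone_nat_of_succ_le
          (f := fun m => if h : m < l then (c ⟨m, h⟩ + m).toNat else 0) key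
      finite := by
        apply Set.Finite.subset (Set.finite_Iio l)
        intro m hm
        simp only [Function.mem_support] at hm
        by_contra hml
        simp only [Set.mem_Iio, not_lt] at hml
        exact hm (dif_neg (by omega)) }
  else Partition.empty

theorem mkPart_parts_lt {l : ℕ} {c : Fin l → ℤ} (hc : StrictAnti c)
    (h0 : ∀ i : Fin l, 0 ≤ c i + (i : ℕ)) {m : ℕ} (hm : m < l) :
    ((mkPart l c).parts m : ℤ) = c ⟨m, hm⟩ + m := by
  rw [mkPart, dif_pos ⟨hc, h0⟩]
  simp only [dif_pos hm]
  rw [Int.toNat_of_nonneg (h0 ⟨m, hm⟩)]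

theorem mkPart_parts_ge {l : ℕ} {c : Fin l → ℤ} {m : ℕ} (hm : l ≤ m) :
    (mkPart l c).parts m = 0 := by
  rw [mkPart]
  split
  · exact dif_neg (by omega)
  · rfl

theorem det_Mmat_eq_sum (n : ℕ) (mu lam : Partition) (l : ℕ) :
    Matrix.det (Mmat n mu lam l) = ∑ σ : Equiv.Perm (Fin l),
      if (∀ i : Fin l,
          (mu.parts i : ℤ) - (i : ℤ) ≤ (lam.parts (σ i) : ℤ) - ((σ i : Fin l) : ℤ) ∧
          (n : ℤ) ∣ ((lam.parts (σ i) : ℤ) - ((σ i : Fin l) : ℤ) - ((mu.parts i : ℤ) - (i : ℤ))))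
      then (Equiv.Perm.sign σ : ℤ) else 0 := by
  classical
  rw [Matrix.det_apply']
  apply Finset.sum_congr rfl
  intro σ _
  have hprod : (∏ i, Mmat n mu lam l (σ i) i) = if (∀ i : Fin l,
      (mu.parts i : ℤ) - (i : ℤ) ≤ (lam.parts (σ i) : ℤ) - ((σ i : Fin l) : ℤ) ∧
      (n : ℤ) ∣ ((lam.parts (σ i) : ℤ) - ((σ i : Fin l) : ℤ) - ((mu.parts i : ℤ) - (i : ℤ))))
      then 1 else 0 := by
    by_cases hP : (∀ i : Fin l,
        (mu.parts i : ℤ) - (i : ℤ) ≤ (lam.parts (σ i) : ℤ) - ((σ i : Fin l) : ℤ) ∧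
        (n : ℤ) ∣ ((lam.parts (σ i) : ℤ) - ((σ i : Fin l) : ℤ) - ((mu.parts i : ℤ) - (i : ℤ))))
    · rw [if_pos hP]
      apply Finset.prod_eq_one
      intro i _
      simp only [Mmat, Matrix.of_apply]
      rw [if_pos (hP i)]
    · rw [if_neg hP]
      push_neg at hP
      obtain ⟨i, hi⟩ := hP
      apply Finset.prod_eq_zero (Finset.mem_univ i)
      simp only [Mmat, Matrix.of_apply]
      rw [if_neg]
      intro hc
      exact absurd hc (by tauto)
  rw [hprod]
  split_ifs <;> simp

theorem det_Mmat_eq_zero {n : ℕ} {mu lam : Partition} {l : ℕ} (hl : lam.length ≤ l)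
    (hmu : ∀ i, l ≤ i → mu.parts i = 0) (hnsub : ¬ mu.Sub lam) :
    Matrix.det (Mmat n mu lam l) = 0 := by
  classical
  simp only [Partition.Sub, not_forall, not_le] at hnsub
  obtain ⟨j0, hj0⟩ := hnsub
  have hj0l : j0 < l := by
    by_contra hge
    rw [hmu j0 (not_lt.mp hge)] at hj0
    omega
  set J : Fin l := ⟨j0, hj0l⟩ with hJ
  rw [Matrix.det_apply']
  apply Finset.sum_eq_zero
  intro σ _
  have hex : ∃ i : Fin l, i ≤ J ∧ J ≤ σ i := by
    by_contra hno
    push_neg at hno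
    have hmap : ∀ i ∈ Finset.Iic J, σ i ∈ Finset.Iio J := by
      intro i hi
      simp only [Finset.mem_Iic] at hi
      simp only [Finset.mem_Iio]
      exact hno i hi
    have hcard : (Finset.Iio J).card < (Finset.Iic J).card := by
      rw [Fin.card_Iic, Fin.card_Iio]
      omega
    obtain ⟨x, hx, y, hy, hxy, hfxy⟩ :=
      Finset.exists_ne_map_eq_of_card_lt_of_maps_to hcard hmap
    exact hxy (σ.injective hfxy)
  obtain ⟨i, hiJ, hJsi⟩ := hex
  apply mul_eq_zero_of_right
  apply Finset.prod_eq_zero (Finset.mem_univ i)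
  have hcond : ¬ ((mu.parts i : ℤ) - (i : ℤ) ≤ (lam.parts (σ i) : ℤ) - ((σ i) : ℤ)) := by
    have h1 : mu.parts j0 ≤ mu.parts i := mu.antitone (by exact_mod_cast hiJ)
    have h2 : lam.parts (σ i) ≤ lam.parts j0 := lam.antitone (by exact_mod_cast hJsi)
    have h3 : (i : ℕ) ≤ j0 := hiJ
    have h4 : j0 ≤ ((σ i : Fin l) : ℕ) := hJsi
    push_neg
    push_cast
    omega
  simp only [Mmat, Matrix.of_apply]
  rw [if_neg (fun hh => hcond hh.1)]

/-- Row vector of shifted parts. -/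
noncomputable def cv (mu : Partition) (l : ℕ) : Fin l → ℤ :=
  fun i => (mu.parts i : ℤ) - (i : ℤ)

/-- Rows appearing on the left-hand side. -/
noncomputable def bv (n : ℕ) (lam : Partition) (l : ℕ) (ν : Fin l → ℕ) : Fin l → ℤ :=
  fun i => cv lam l i - (n : ℤ) * (ν i : ℤ)

/-- The condition selecting the nonzero permutation terms of `det M(λ/μ)`. -/
def PP (n : ℕ) (mu lam : Partition) (l : ℕ) (σ : Equiv.Perm (Fin l)) : Prop :=
  ∀ i : Fin l, cv mu l i ≤ cv lam l (σ i) ∧ (n : ℤ) ∣ (cv lam l (σ i) - cv mu l i)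

/-- The compositions whose term on the left-hand side does not obviously vanish. -/
def GoodNu (n : ℕ) (lam : Partition) (l : ℕ) (ν : Fin l → ℕ) : Prop :=
  Function.Injective (bv n lam l ν) ∧ ∀ i : Fin l, 1 - (l : ℤ) ≤ bv n lam l ν i

/-- The sorting permutation for the rows of a left-hand term. -/
noncomputable def tauP (n : ℕ) (lam : Partition) (l : ℕ) (ν : Fin l → ℕ) : Equiv.Perm (Fin l) :=
  Tuple.sort (fun i => -(bv n lam l ν i))

/-- Forward map of the bijection. -/
noncomputable def iMap (n : ℕ) (lam : Partition) (l : ℕ) (ν : Fin l → ℕ) :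
    Partition × Equiv.Perm (Fin l) :=
  (mkPart l (bv n lam l ν ∘ tauP n lam l ν), tauP n lam l ν)

/-- Inverse map of the bijection. -/
noncomputable def jMap (n : ℕ) (lam : Partition) (l : ℕ)
    (p : Partition × Equiv.Perm (Fin l)) : Fin l → ℕ :=
  fun i => ((cv lam l i - cv p.1 l (p.2⁻¹ i)) / n).toNat

theorem good_nonneg {l : ℕ} {c : Fin l → ℤ} (hc : StrictAnti c)
    (hlow : ∀ i, 1 - (l : ℤ) ≤ c i) (i : Fin l) : 0 ≤ c i + (i : ℕ) := by
  have hl : (i : ℕ) < l := i.isLt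
  have hlast : l - 1 < l := by omega
  have h1 := strictAnti_add_le' hc (i := i) (j := ⟨l - 1, hlast⟩)
    (by rw [Fin.le_def]; simp; omega)
  have h2 := hlow ⟨l - 1, hlast⟩
  simp only at h1 h2
  have : ((l : ℤ) - 1) = ((l - 1 : ℕ) : ℤ) := by omega
  omega

theorem cv_strictAnti (p : Partition) (l : ℕ) : StrictAnti (cv p l) := by
  intro i j hij
  have h1 : p.parts j ≤ p.parts i := p.antitone (le_of_lt hij)
  have h2 : (i : ℕ) < (j : ℕ) := hij
  simp only [cv]
  omega

theorem jMap_spec {n l : ℕ} (hn : 0 < n) {lam : Partition} {p : Partition × Equiv.Perm (Fin l)}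
    (hP : PP n p.1 lam l p.2) (i : Fin l) :
    (n : ℤ) * (jMap n lam l p i : ℤ) = cv lam l i - cv p.1 l (p.2⁻¹ i) := by
  have h := hP (p.2⁻¹ i)
  rw [(by simp : p.2 (p.2⁻¹ i) = i)] at h
  obtain ⟨hle, hdvd⟩ := h
  have hnn : 0 ≤ cv lam l i - cv p.1 l (p.2⁻¹ i) := by omega
  have hq : 0 ≤ (cv lam l i - cv p.1 l (p.2⁻¹ i)) / n :=
    Int.ediv_nonneg hnn (by positivity)
  rw [jMap, Int.toNat_of_nonneg hq, Int.mul_ediv_cancel' hdvd]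

theorem bv_jMap {n l : ℕ} (hn : 0 < n) {lam : Partition} {p : Partition × Equiv.Perm (Fin l)}
    (hP : PP n p.1 lam l p.2) :
    bv n lam l (jMap n lam l p) = cv p.1 l ∘ (p.2⁻¹ : Equiv.Perm (Fin l)) := by
  funext i
  have := jMap_spec hn hP i
  simp only [bv, Function.comp_apply]
  omega

theorem sum_cv {l : ℕ} {p : Partition} (h : ∀ i, l ≤ i → p.parts i = 0) :
    ∑ i : Fin l, cv p l i = (p.size : ℤ) - ∑ i : Fin l, ((i : ℕ) : ℤ) := by
  simp only [cv]
  rw [Finset.sum_sub_distrib]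
  congr 1
  rw [Partition.size_eq_sum h]
  push_cast
  rw [Fin.sum_univ_eq_sum_range (fun m => ((p.parts m : ℤ)))]

theorem iMap_spec {n l k : ℕ} (hn : 0 < n) {lam : Partition}
    (hlam : ∀ i, l ≤ i → lam.parts i = 0)
    {ν : Fin l → ℕ} (hν : ∑ i, ν i = k) (hg : GoodNu n lam l ν) :
    (∀ i, l ≤ i → (iMap n lam l ν).1.parts i = 0) ∧
    (iMap n lam l ν).1.size + n * k = lam.size ∧
    PP n (iMap n lam l ν).1 lam l (iMap n lam l ν).2 ∧
    cv (iMap n lam l ν).1 l = bv n lam l ν ∘ (iMap n lam l ν).2 := by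
  have hsa : StrictAnti (bv n lam l ν ∘ tauP n lam l ν) := sort_strictAnti _ hg.1
  have h0 : ∀ i : Fin l, 0 ≤ (bv n lam l ν ∘ tauP n lam l ν) i + (i : ℕ) :=
    good_nonneg hsa (fun i => hg.2 _)
  have hge : ∀ i, l ≤ i → (iMap n lam l ν).1.parts i = 0 := by
    intro i hi
    exact mkPart_parts_ge hi
  have hcv : cv (iMap n lam l ν).1 l = bv n lam l ν ∘ (iMap n lam l ν).2 := by
    funext i
    have := mkPart_parts_lt hsa h0 (m := (i : ℕ)) i.isLt
    simp only [cv, iMap]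
    rw [this]
    simp
  refine ⟨hge, ?_, ?_, hcv⟩
  · -- size identity
    have hsz : (iMap n lam l ν).1.size = ∑ m ∈ Finset.range l, (iMap n lam l ν).1.parts m :=
      Partition.size_eq_sum hge
    have hszZ : ((iMap n lam l ν).1.size : ℤ) = ∑ i : Fin l, cv (iMap n lam l ν).1 l i
        + ∑ i : Fin l, ((i : ℕ) : ℤ) := by
      rw [hsz]
      push_cast
      rw [← Fin.sum_univ_eq_sum_range (fun m => (((iMap n lam l ν).1.parts m : ℤ)))]
      rw [← Finset.sum_add_distrib]
      apply Finset.sum_congr rfl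
      intro i _
      simp only [cv]
      ring
    have hsum1 : ∑ i : Fin l, cv (iMap n lam l ν).1 l i = ∑ i : Fin l, bv n lam l ν i := by
      rw [hcv]
      exact Equiv.sum_comp (iMap n lam l ν).2 (bv n lam l ν)
    have hsum2 : ∑ i : Fin l, bv n lam l ν i
        = (lam.size : ℤ) - ∑ i : Fin l, ((i : ℕ) : ℤ) - (n : ℤ) * (k : ℤ) := by
      simp only [bv]
      rw [Finset.sum_sub_distrib, sum_cv hlam, ← Finset.mul_sum]
      have : ∑ i : Fin l, ((ν i : ℕ) : ℤ) = (k : ℤ) := by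
        exact_mod_cast hν
      rw [this]
    have : ((iMap n lam l ν).1.size : ℤ) + (n : ℤ) * (k : ℤ) = (lam.size : ℤ) := by
      rw [hszZ, hsum1, hsum2]; ring
    push_cast at this
    exact_mod_cast this
  · -- PP
    intro i
    have := congrFun hcv i
    simp only [Function.comp_apply] at this
    rw [this]
    simp only [bv]
    constructor
    · have : (0 : ℤ) ≤ (n : ℤ) * (ν ((iMap n lam l ν).2 i) : ℤ) := by positivity
      omega
    · exact ⟨(ν ((iMap n lam l ν).2 i) : ℤ), by ring⟩

open scoped Classical in
theorem det_Mmat_eq_sum' (n : ℕ) (mu lam : Partition) (l : ℕ) :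
    Matrix.det (Mmat n mu lam l) = ∑ σ : Equiv.Perm (Fin l),
      if PP n mu lam l σ then ((Equiv.Perm.sign σ : ℤ)) else 0 := by
  rw [det_Mmat_eq_sum]
  apply Finset.sum_congr rfl
  intro σ _
  apply if_congr ?_ rfl rfl
  exact Iff.rfl

end Pleth

end Aux

open Pleth

open Pleth
/-- The Jacobi–Trudi form of the vertex-operator identity
`V_k^{(n)*} S_λ·1 = Σ_{ν ⊨ k} S_{λ−nν}·1 = Σ_μ det(M(λ/μ)) S_μ·1`. -/
theorem sum_compositions_eq_sum_det (n k N : ℕ) (hn : 0 < n) (hk : 0 < k) (hN : 0 < N)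
    (lam : Partition) :
    ∑ ν ∈ Finset.Nat.antidiagonalTuple lam.length k,
      Matrix.det (Matrix.of fun i j : Fin lam.length =>
        hInt N ((lam.parts i : ℤ) - ((n * ν i : ℕ) : ℤ) - (i : ℤ) + (j : ℤ))) =
    ∑ᶠ mu ∈ {mu : Partition | mu.Sub lam ∧ mu.size + n * k = lam.size},
      ((Matrix.det (Mmat n mu lam lam.length) : ℤ) : MvPolynomial (Fin N) ℚ) *
        Matrix.det (Matrix.of fun i j : Fin lam.length =>
          hInt N ((mu.parts i : ℤ) - (i : ℤ) + (j : ℤ))) := by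
  classical
  set l := lam.length with hldef
  have hlamz : ∀ i, l ≤ i → lam.parts i = 0 := fun i hi =>
    Partition.parts_eq_zero_of_length_le hi
  set S' : Set Partition :=
    {mu : Partition | (∀ i, l ≤ i → mu.parts i = 0) ∧ mu.size + n * k = lam.size} with hS'def
  -- finiteness of the enlarged index set
  have hS' : S'.Finite := by
    have hinj : Function.Injective
        (fun (mu : ↥S') (i : Fin l) => (⟨mu.1.parts i, by
          have h1 : mu.1.size = ∑ m ∈ Finset.range l, mu.1.parts m :=
            Partition.size_eq_sum mu.2.1
          have h2 : mu.1.parts i ≤ mu.1.size := by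
            rw [h1]
            exact Finset.single_le_sum (f := fun m => mu.1.parts m)
              (fun _ _ => Nat.zero_le _) (Finset.mem_range.mpr i.isLt)
          have h3 : mu.1.size ≤ lam.size := by
            have := mu.2.2
            omega
          omega⟩ : Fin (lam.size + 1))) := by
      intro mu1 mu2 heq
      apply Subtype.ext
      apply Partition.ext'
      funext m
      by_cases hm : m < l
      · have := congrFun heq ⟨m, hm⟩
        simpa using this
      · rw [mu1.2.1 m (not_lt.mp hm), mu2.2.1 m (not_lt.mp hm)]
    have : Finite ↥S' := Finite.of_injective _ hinj
    exact Set.finite_coe_iff.mp this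
  have hsub : {mu : Partition | mu.Sub lam ∧ mu.size + n * k = lam.size} ⊆ S' := by
    rintro mu ⟨h1, h2⟩
    refine ⟨fun i hi => ?_, h2⟩
    have h3 := h1 i
    rw [hlamz i hi] at h3
    omega
  have hS : {mu : Partition | mu.Sub lam ∧ mu.size + n * k = lam.size}.Finite :=
    hS'.subset hsub
  -- rewrite the right-hand side as a finite sum
  rw [finsum_mem_eq_finite_toFinset_sum _ hS]
  -- Step 1: left-hand side in terms of `Dmat` and `bv`
  have h1 : ∑ ν ∈ Finset.Nat.antidiagonalTuple l k,
      Matrix.det (Matrix.of fun i j : Fin l =>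
        hInt N ((lam.parts i : ℤ) - ((n * ν i : ℕ) : ℤ) - (i : ℤ) + (j : ℤ))) =
      ∑ ν ∈ Finset.Nat.antidiagonalTuple l k, Dmat N l (bv n lam l ν) := by
    apply Finset.sum_congr rfl
    intro ν _
    unfold Dmat
    congr 1
    ext i j
    simp only [Matrix.of_apply]
    congr 1
    simp only [bv, cv]
    push_cast
    ring
  rw [h1]
  -- Step 2: restrict to the good compositions
  rw [← Finset.sum_filter_of_ne (p := GoodNu n lam l)
    (f := fun ν => Dmat N l (bv n lam l ν)) (by
      intro ν _ hne
      by_contra hbad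
      rw [GoodNu, not_and_or] at hbad
      rcases hbad with hbad | hbad
      · exact hne (Dmat_eq_zero_of_not_injective hbad)
      · push_neg at hbad
        obtain ⟨i, hi⟩ := hbad
        exact hne (Dmat_eq_zero_of_low i (by omega)))]
  -- Step 3: the bijection
  have h3 : ∑ ν ∈ (Finset.Nat.antidiagonalTuple l k).filter (GoodNu n lam l),
      Dmat N l (bv n lam l ν) =
      ∑ p ∈ (hS'.toFinset ×ˢ (Finset.univ : Finset (Equiv.Perm (Fin l)))).filter
        (fun p => PP n p.1 lam l p.2),
      ((Equiv.Perm.sign p.2 : ℤ) : MvPolynomial (Fin N) ℚ) * Dmat N l (cv p.1 l) := by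
    apply Finset.sum_nbij' (i := iMap n lam l) (j := jMap n lam l)
    · -- hi
      intro ν hν
      simp only [Finset.mem_filter, Finset.Nat.mem_antidiagonalTuple] at hν
      obtain ⟨hνk, hgood⟩ := hν
      obtain ⟨hge, hsz, hPP, _⟩ := iMap_spec hn hlamz hνk hgood
      simp only [Finset.mem_filter, Finset.mem_product, Set.Finite.mem_toFinset,
        Finset.mem_univ, and_true]
      exact ⟨⟨hge, hsz⟩, hPP⟩
    · -- hj
      intro p hp
      simp only [Finset.mem_filter, Finset.mem_product, Set.Finite.mem_toFinset,
        Finset.mem_univ, and_true] at hp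
      obtain ⟨⟨hge, hsz⟩, hPP⟩ := hp
      have hbv := bv_jMap hn (lam := lam) hPP
      simp only [Finset.mem_filter, Finset.Nat.mem_antidiagonalTuple]
      constructor
      · -- sum condition
        have hmul : (n : ℤ) * (∑ i : Fin l, (jMap n lam l p i : ℤ)) = (n : ℤ) * (k : ℤ) := by
          rw [Finset.mul_sum]
          have : ∀ i : Fin l, (n : ℤ) * (jMap n lam l p i : ℤ)
              = cv lam l i - cv p.1 l (p.2⁻¹ i) := fun i => jMap_spec hn hPP i
          rw [Finset.sum_congr rfl (fun i _ => this i)]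
          rw [Finset.sum_sub_distrib, sum_cv hlamz]
          have hperm : ∑ i : Fin l, cv p.1 l (p.2⁻¹ i) = ∑ i : Fin l, cv p.1 l i :=
            Equiv.sum_comp (p.2⁻¹ : Equiv.Perm (Fin l)) (cv p.1 l)
          rw [hperm, sum_cv hge]
          have hszZ : (p.1.size : ℤ) + (n : ℤ) * (k : ℤ) = (lam.size : ℤ) := by
            exact_mod_cast congrArg (Nat.cast : ℕ → ℤ) hsz
          ring_nf
          omega
        have hsum : (∑ i : Fin l, (jMap n lam l p i : ℤ)) = (k : ℤ) :=
          mul_left_cancel₀ (by exact_mod_cast hn.ne' : (n : ℤ) ≠ 0) hmul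
        exact_mod_cast hsum
      · -- goodness
        constructor
        · rw [hbv]
          exact (cv_strictAnti p.1 l).injective.comp (Equiv.injective _)
        · intro i
          rw [hbv]
          simp only [Function.comp_apply, cv]
          have h1 : ((p.2⁻¹ i : Fin l) : ℕ) < l := (p.2⁻¹ i).isLt
          have h2 : (0 : ℤ) ≤ (p.1.parts (p.2⁻¹ i) : ℤ) := Int.natCast_nonneg _
          omega
    · -- left inverse
      intro ν hν
      simp only [Finset.mem_filter, Finset.Nat.mem_antidiagonalTuple] at hν
      obtain ⟨hνk, hgood⟩ := hν
      obtain ⟨_, _, _, hcv⟩ := iMap_spec hn hlamz hνk hgood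
      funext i
      have hcvi := congrFun hcv ((iMap n lam l ν).2⁻¹ i)
      simp only [Function.comp_apply, (by simp : ∀ x, (iMap n lam l ν).2 ((iMap n lam l ν).2⁻¹ x) = x)] at hcvi
      simp only [jMap]
      rw [hcvi]
      have : cv lam l i - bv n lam l ν i = (n : ℤ) * (ν i : ℤ) := by
        simp only [bv]; ring
      rw [this, Int.mul_ediv_cancel_left _ (by exact_mod_cast hn.ne' : (n : ℤ) ≠ 0)]
      simp
    · -- right inverse
      intro p hp
      simp only [Finset.mem_filter, Finset.mem_product, Set.Finite.mem_toFinset,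
        Finset.mem_univ, and_true] at hp
      obtain ⟨⟨hge, hsz⟩, hPP⟩ := hp
      have hbv := bv_jMap hn (lam := lam) hPP
      have hinj : Function.Injective (bv n lam l (jMap n lam l p)) := by
        rw [hbv]
        exact (cv_strictAnti p.1 l).injective.comp (Equiv.injective _)
      have hsa := sort_strictAnti _ hinj
      have hτσ : tauP n lam l (jMap n lam l p) = p.2 := by
        have hπ : StrictAnti (cv p.1 l ∘ ⇑(p.2⁻¹ * tauP n lam l (jMap n lam l p))) := by
          have heqf : cv p.1 l ∘ ⇑(p.2⁻¹ * tauP n lam l (jMap n lam l p)) =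
              bv n lam l (jMap n lam l p) ∘ ⇑(tauP n lam l (jMap n lam l p)) := by
            rw [hbv]
            rfl
          rw [heqf]
          exact hsa
        have hone := perm_eq_of_strictAnti_comp (cv_strictAnti p.1 l) _ hπ
        exact (inv_mul_eq_one.mp hone).symm
      have hfun : bv n lam l (jMap n lam l p) ∘ ⇑(tauP n lam l (jMap n lam l p)) =
          cv p.1 l := by
        rw [hbv, hτσ]
        funext i
        simp
      have hpart : mkPart l (cv p.1 l) = p.1 := by
        apply Partition.ext'
        funext m
        by_cases hm : m < l
        · have := mkPart_parts_lt (cv_strictAnti p.1 l) (fun i => by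
            simp only [cv]; omega) hm
          have heq : ((mkPart l (cv p.1 l)).parts m : ℤ) = (p.1.parts m : ℤ) := by
            rw [this]
            simp only [cv]
            omega
          exact_mod_cast heq
        · rw [mkPart_parts_ge (not_lt.mp hm), hge m (not_lt.mp hm)]
      simp only [iMap]
      rw [hfun, hτσ, hpart]
    · -- values
      intro ν hν
      simp only [Finset.mem_filter, Finset.Nat.mem_antidiagonalTuple] at hν
      obtain ⟨hνk, hgood⟩ := hν
      obtain ⟨_, _, _, hcv⟩ := iMap_spec hn hlamz hνk hgood
      rw [hcv]
      have hperm := Dmat_perm (N := N) (bv n lam l ν) (iMap n lam l ν).2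
      rw [hperm, ← mul_assoc]
      have hsign : ((Equiv.Perm.sign (iMap n lam l ν).2 : ℤ) : MvPolynomial (Fin N) ℚ) *
          ((Equiv.Perm.sign (iMap n lam l ν).2 : ℤ) : MvPolynomial (Fin N) ℚ) = 1 := by
        rw [← Int.cast_mul]
        rw [← Units.val_mul, Int.units_mul_self]
        simp
      rw [hsign, one_mul]
  rw [h3]
  -- Step 4: unfold the filter over pairs
  have h4 : ∑ p ∈ (hS'.toFinset ×ˢ (Finset.univ : Finset (Equiv.Perm (Fin l)))).filter
        (fun p => PP n p.1 lam l p.2),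
      ((Equiv.Perm.sign p.2 : ℤ) : MvPolynomial (Fin N) ℚ) * Dmat N l (cv p.1 l) =
      ∑ p ∈ hS'.toFinset ×ˢ (Finset.univ : Finset (Equiv.Perm (Fin l))),
      (((if PP n p.1 lam l p.2 then (Equiv.Perm.sign p.2 : ℤ) else 0) : ℤ) :
        MvPolynomial (Fin N) ℚ) * Dmat N l (cv p.1 l) := by
    rw [Finset.sum_filter]
    apply Finset.sum_congr rfl
    intro p _
    split_ifs with h
    · rfl
    · simp
  rw [h4]
  -- Step 5: recombine the determinant of M
  have h5 : ∑ p ∈ hS'.toFinset ×ˢ (Finset.univ : Finset (Equiv.Perm (Fin l))),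
      (((if PP n p.1 lam l p.2 then (Equiv.Perm.sign p.2 : ℤ) else 0) : ℤ) :
        MvPolynomial (Fin N) ℚ) * Dmat N l (cv p.1 l) =
      ∑ mu ∈ hS'.toFinset,
      ((Matrix.det (Mmat n mu lam l) : ℤ) : MvPolynomial (Fin N) ℚ) * Dmat N l (cv mu l) := by
    rw [Finset.sum_product]
    apply Finset.sum_congr rfl
    intro mu _
    show (∑ σ : Equiv.Perm (Fin l),
        (((if PP n mu lam l σ then ((Equiv.Perm.sign σ : ℤ)) else 0) : ℤ) :
          MvPolynomial (Fin N) ℚ) * Dmat N l (cv mu l)) = _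
    rw [← Finset.sum_mul, ← Int.cast_sum, ← det_Mmat_eq_sum']
  rw [h5]
  -- Step 6: drop the vanishing terms
  have h6 : ∑ mu ∈ hS.toFinset,
      ((Matrix.det (Mmat n mu lam l) : ℤ) : MvPolynomial (Fin N) ℚ) * Dmat N l (cv mu l) =
      ∑ mu ∈ hS'.toFinset,
      ((Matrix.det (Mmat n mu lam l) : ℤ) : MvPolynomial (Fin N) ℚ) * Dmat N l (cv mu l) := by
    apply Finset.sum_subset
    · intro mu hmu
      rw [Set.Finite.mem_toFinset] at hmu ⊢
      exact hsub hmu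
    · intro mu hmu hnmem
      rw [Set.Finite.mem_toFinset] at hmu hnmem
      have hnsub : ¬ mu.Sub lam := by
        intro hcon
        exact hnmem ⟨hcon, hmu.2⟩
      rw [det_Mmat_eq_zero le_rfl hmu.1 hnsub]
      simp
  rw [← h6]
  -- Step 7: identify the summands
  apply Finset.sum_congr rfl
  intro mu _
  congr 1
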